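/- For all integers n ≥ 2, all k with 1 ≤ k ≤ n−1, and all k₁ with 0 ≤ k₁ ≤ k−1, the coefficients c satisfy the identity ∑_{l=k₁+1}^{n−(k−k₁)} C(n,l) · c(k₁, l) · c(k−k₁−1, n−l) = c(k, n), where C(n,l) denotes the binomial coefficient. -/

import Mathlib

/-- The coefficients `c k n` defined by `c 0 n = 1` and the recursion
`c k n = ∑_{i=1}^{n-k} C(n,i) c (k-1) (n-i)`. -/
def c : ℕ → ℕ → ℕ
  | 0, _ => 1
  | k + 1, n => ∑ i ∈ Finset.Icc 1 (n - (k + 1)), Nat.choose n i * c k (n - i)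

lemma conv (a : ℕ) : ∀ b n : ℕ, a + b + 1 ≤ n →
    ∑ l ∈ Finset.Icc (a + 1) (n - (b + 1)), Nat.choose n l * c a l * c b (n - l)
      = c (a + b + 1) n := by
  induction a with
  | zero =>
    intro b n h
    simp only [Nat.zero_add, c, mul_one]
  | succ a ih =>
    intro b n h
    have h' : a + (b + 1) + 1 ≤ n := by omega
    rw [show a + 1 + b + 1 = a + (b + 1) + 1 by ring, ← ih (b + 1) n h']
    simp only [c]
    simp only [Finset.sum_mul, Finset.mul_sum]
    rw [Finset.sum_sigma', Finset.sum_sigma']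
    refine Finset.sum_nbij' (fun p => ⟨p.1 - p.2, p.2⟩) (fun q => ⟨q.1 + q.2, q.2⟩)
      ?_ ?_ ?_ ?_ ?_
    · rintro ⟨l, i⟩ hp
      simp only [Finset.mem_sigma, Finset.mem_Icc] at hp ⊢
      omega
    · rintro ⟨m, j⟩ hq
      simp only [Finset.mem_sigma, Finset.mem_Icc] at hq ⊢
      omega
    · rintro ⟨l, i⟩ hp
      simp only [Finset.mem_sigma, Finset.mem_Icc] at hp
      have hli : l - i + i = l := by omega
      simp [hli]
    · rintro ⟨m, j⟩ hq
      simp [Nat.add_sub_cancel]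
    · rintro ⟨l, i⟩ hp
      simp only [Finset.mem_sigma, Finset.mem_Icc] at hp
      have hil : i ≤ l := by omega
      have hln : l ≤ n := by omega
      have h1 : n - (l - i) - i = n - l := by omega
      have h2 : l - (l - i) = i := by omega
      have key := Nat.choose_mul (n := n) (Nat.sub_le l i)
      rw [h2] at key
      rw [h1, ← Nat.choose_symm hil]
      rw [show Nat.choose n l * (Nat.choose l (l - i) * c a (l - i)) * c b (n - l)
        = Nat.choose n l * Nat.choose l (l - i) * (c a (l - i) * c b (n - l)) by ring, key]
      ring

theorem combinatorial_identity (n : ℕ) (hn : 2 ≤ n) (k : ℕ) (hk1 : 1 ≤ k) (hk2 : k ≤ n - 1)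
    (k₁ : ℕ) (hk₁ : k₁ ≤ k - 1) :
    ∑ l ∈ Finset.Icc (k₁ + 1) (n - (k - k₁)),
        Nat.choose n l * c k₁ l * c (k - k₁ - 1) (n - l) = c k n := by
  have h : k₁ + (k - k₁ - 1) + 1 ≤ n := by omega
  have := conv k₁ (k - k₁ - 1) n h
  rw [show k - k₁ - 1 + 1 = k - k₁ by omega] at this
  rw [show k₁ + (k - k₁ - 1) + 1 = k by omega] at this
  exact this
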